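/- Let a, b, c be three pairwise distinct points of EuclideanSpace ℝ (Fin 3) with ‖a‖ = ‖b‖ = ‖c‖ = 1 (i.e., three distinct points on the unit sphere centered at the origin). Then the angle between the vectors a − b and c − b is at least ‖a − c‖ / 2. -/

import Mathlib

open Real InnerProductGeometry
open scoped RealInnerProductSpace

/-- The inscribed-angle argument in the proof of Theorem 1 of the paper:
for three distinct points `a, b, c` on the unit sphere in `ℝ³`, the
angle `∠ a b c` is at least `‖a - c‖ / 2`. -/
theorem angle_on_unit_sphere_ge
    (a b c : EuclideanSpace ℝ (Fin 3))
    (hab : a ≠ b) (hac : a ≠ c) (hbc : b ≠ c)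
    (ha : ‖a‖ = 1) (hb : ‖b‖ = 1) (hc : ‖c‖ = 1) :
    ‖a - c‖ / 2 ≤ angle (a - b) (c - b) := by
  set α := ⟪a, b⟫ with hα
  set β := ⟪b, c⟫ with hβ
  set γ := ⟪a, c⟫ with hγ
  have haa : ⟪a, a⟫ = 1 := by rw [real_inner_self_eq_norm_mul_norm, ha]; ring
  have hbb : ⟪b, b⟫ = 1 := by rw [real_inner_self_eq_norm_mul_norm, hb]; ring
  have hcc : ⟪c, c⟫ = 1 := by rw [real_inner_self_eq_norm_mul_norm, hc]; ring
  have hba : ⟪b, a⟫ = α := (real_inner_comm b a).symm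
  have hcb : ⟪c, b⟫ = β := (real_inner_comm c b).symm
  have hca : ⟪c, a⟫ = γ := (real_inner_comm c a).symm
  -- Gram determinant is nonnegative (Cauchy–Schwarz)
  have hG : 0 ≤ 1 + 2 * α * β * γ - α ^ 2 - β ^ 2 - γ ^ 2 := by
    have hcs := real_inner_mul_inner_self_le (b - α • a) (c - γ • a)
    have h1 : ⟪b - α • a, c - γ • a⟫ = β - α * γ := by
      simp only [inner_sub_left, inner_sub_right, real_inner_smul_left, real_inner_smul_right,
        haa, hba, hca, ← hβ]
      ring
    have h2 : ⟪b - α • a, b - α • a⟫ = 1 - α ^ 2 := by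
      simp only [inner_sub_left, inner_sub_right, real_inner_smul_left, real_inner_smul_right,
        haa, hba, hbb, ← hα]
      ring
    have h3 : ⟪c - γ • a, c - γ • a⟫ = 1 - γ ^ 2 := by
      simp only [inner_sub_left, inner_sub_right, real_inner_smul_left, real_inner_smul_right,
        haa, hca, hcc, ← hγ]
      ring
    rw [h1, h2, h3] at hcs
    nlinarith [hcs]
  set u := a - b with hu
  set v := c - b with hv
  have huu : ⟪u, u⟫ = 2 - 2 * α := by
    simp only [hu, inner_sub_left, inner_sub_right, haa, hbb, hba, ← hα]; ring
  have hvv : ⟪v, v⟫ = 2 - 2 * β := by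
    simp only [hv, inner_sub_left, inner_sub_right, hcc, hbb, hcb, ← hβ]; ring
  have huv : ⟪u, v⟫ = 1 + γ - α - β := by
    simp only [hu, hv, inner_sub_left, inner_sub_right, haa, hbb, hba, hcb, ← hγ, ← hα, ← hβ]; ring
  have hw : ‖a - c‖ ^ 2 = 2 - 2 * γ := by
    rw [← real_inner_self_eq_norm_sq]
    simp only [inner_sub_left, inner_sub_right, haa, hcc, hca, ← hγ]; ring
  have hun : 0 < ‖u‖ := norm_pos_iff.2 (sub_ne_zero.2 hab)
  have hvn : 0 < ‖v‖ := norm_pos_iff.2 (sub_ne_zero.2 hbc.symm)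
  have hwnn : 0 ≤ ‖a - c‖ := norm_nonneg _
  have key : ‖a - c‖ / 2 ≤ Real.sin (angle u v) := by
    have hs := sin_angle_mul_norm_mul_norm u v
    rw [huu, hvv, huv] at hs
    have hsq : (‖a - c‖ / 2 * (‖u‖ * ‖v‖)) ^ 2 ≤
        (2 - 2 * α) * (2 - 2 * β) - (1 + γ - α - β) * (1 + γ - α - β) := by
      have hu2 : ‖u‖ ^ 2 = 2 - 2 * α := by rw [← real_inner_self_eq_norm_sq, huu]
      have hv2 : ‖v‖ ^ 2 = 2 - 2 * β := by rw [← real_inner_self_eq_norm_sq, hvv]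
      have : (‖a - c‖ / 2 * (‖u‖ * ‖v‖)) ^ 2 = (2 - 2 * γ) / 4 * ((2 - 2 * α) * (2 - 2 * β)) := by
        rw [← hw, ← hu2, ← hv2]; ring
      rw [this]
      nlinarith [hG]
    have hle : ‖a - c‖ / 2 * (‖u‖ * ‖v‖) ≤
        Real.sqrt ((2 - 2 * α) * (2 - 2 * β) - (1 + γ - α - β) * (1 + γ - α - β)) := by
      have hwpos : 0 < ‖a - c‖ := norm_pos_iff.2 (sub_ne_zero.2 hac)
      exact (Real.le_sqrt' (by positivity)).2 hsq
    rw [← hs] at hle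
    have := (mul_le_mul_iff_of_pos_right (mul_pos hun hvn)).1 hle
    exact this
  calc ‖a - c‖ / 2 ≤ Real.sin (angle u v) := key
    _ ≤ angle u v := Real.sin_le (angle_nonneg u v)
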